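/- Let n ≥ 4 and let (q_1,…,q_n) be a tuple of symmetric bilinear maps ℝ^n × ℝ^n → ℝ^n lying in Ker L^Ψ_I ∩ W, where I is the identity matrix. Then q_i(e_j,e_k) = 0 for all i,j,k = 1,…,n; consequently q_1 = ⋯ = q_n = 0, i.e. Ker L^Ψ_I ∩ W = {0}. -/

import Mathlib

open scoped RealInnerProductSpace

noncomputable section

/-- `ℝ^n` with the Euclidean inner product and norm. -/
abbrev E (n : ℕ) : Type := EuclideanSpace ℝ (Fin n)

/-- The symmetric bilinear map `Q_v(ξ,η) = ⟨ξ,η⟩·v − ⟨ξ,v⟩·η − ⟨η,v⟩·ξ`. -/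
def Qv {n : ℕ} (v ξ η : E n) : E n := ⟪ξ, η⟫ • v - ⟪ξ, v⟫ • η - ⟪η, v⟫ • ξ

/-- The bracket `[Q,Q']` of two (symmetric bilinear) maps. -/
def brk {n : ℕ} (Q Q' : E n → E n → E n) (ξ η θ : E n) : E n :=
  (Q ξ (Q' η θ) + Q η (Q' θ ξ) + Q θ (Q' ξ η))
    - (Q' ξ (Q η θ) + Q' η (Q θ ξ) + Q' θ (Q ξ η))

/-- A map `ℝ^n × ℝ^n → ℝ^n` is a symmetric bilinear map. -/
def IsSymmBilin {n : ℕ} (q : E n → E n → E n) : Prop :=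
  (∀ ξ η, q ξ η = q η ξ) ∧ ∀ ξ, IsLinearMap ℝ (q ξ)

/-- The standard basis vectors `e_1, …, e_n` of `ℝ^n`. -/
def stdE (n : ℕ) (i : Fin n) : E n := EuclideanSpace.single i 1

/-- The `i`-th component of `L^Φ_B (A', B')`, where `v = v_i` is the `i`-th column of `B`
and `ω = ω_i` the `i`-th column of `B'`. -/
def LPhiC {n : ℕ} (A' : E n →ₗ[ℝ] E n) (v ω : E n) (ξ η : E n) : E n :=
  A' (Qv v ξ η) - Qv v (A' ξ) η - Qv v ξ (A' η) + Qv ω ξ η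

/-- `(q_1,…,q_n)` lies in the kernel of `L^Ψ_B`, where `v i` are the columns of `B`. -/
def KerPsi {n : ℕ} (v : Fin n → E n) (q : Fin n → E n → E n → E n) : Prop :=
  ∀ i j : Fin n, i < j → ∀ ξ η θ : E n,
    brk (q i) (Qv (v j)) ξ η θ = brk (q j) (Qv (v i)) ξ η θ

/-- `(q_1,…,q_n)` lies in the subspace `W`; `i0` is the index of the first coordinate. -/
def memW {n : ℕ} (i0 : Fin n) (q : Fin n → E n → E n → E n) : Prop :=
  (∀ j, q j (stdE n j) (stdE n j) = 0) ∧
  (∀ i j, ⟪stdE n i, q j (stdE n i) (stdE n i)⟫ + ⟪stdE n j, q i (stdE n j) (stdE n j)⟫ = 0) ∧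
  (∀ j, ⟪stdE n i0, q i0 (stdE n j) (stdE n j)⟫ = 0)

/-! ### Auxiliary definitions and lemmas for the proof -/

/-- Kronecker delta with real values. -/
def dd {n : ℕ} (a b : Fin n) : ℝ := if a = b then 1 else 0

/-- The components `⟨e_m, q_i(e_a,e_b)⟩` of the tuple `q`. -/
def Xc {n : ℕ} (q : Fin n → E n → E n → E n) (i a b m : Fin n) : ℝ :=
  q i (stdE n a) (stdE n b) m

lemma stdE_apply {n : ℕ} (a m : Fin n) : (stdE n a) m = dd m a := by
  simp [stdE, dd, EuclideanSpace.single_apply]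

lemma inner_stdE_left {n : ℕ} (a : Fin n) (w : E n) : ⟪stdE n a, w⟫ = w a := by
  simp [stdE, EuclideanSpace.inner_single_left]

lemma inner_stdE_right {n : ℕ} (a : Fin n) (w : E n) : ⟪w, stdE n a⟫ = w a := by
  simp [stdE, EuclideanSpace.inner_single_right]

lemma inner_stdE_stdE {n : ℕ} (a b : Fin n) : ⟪stdE n a, stdE n b⟫ = dd a b := by
  rw [inner_stdE_left, stdE_apply]

lemma Qv_basis {n : ℕ} (j a b : Fin n) :
    Qv (stdE n j) (stdE n a) (stdE n b)
      = dd a b • stdE n j - dd a j • stdE n b - dd b j • stdE n a := by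
  rw [Qv, inner_stdE_stdE, inner_stdE_stdE, inner_stdE_stdE]

lemma Qv_apply {n : ℕ} (j a : Fin n) (w : E n) (m : Fin n) :
    (Qv (stdE n j) (stdE n a) w) m = w a * dd m j - dd a j * w m - w j * dd m a := by
  rw [Qv, inner_stdE_left, inner_stdE_stdE, inner_stdE_right]
  simp only [PiLp.sub_apply, PiLp.smul_apply, smul_eq_mul, stdE_apply]
  try ring

lemma q_lin {n : ℕ} (q : E n → E n → E n) (hq : IsSymmBilin q) (ξ : E n)
    (r s t : ℝ) (u v w : E n) :
    q ξ (r • u - s • v - t • w) = r • q ξ u - s • q ξ v - t • q ξ w := by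
  have h := hq.2 ξ
  rw [h.map_sub, h.map_sub, h.map_smul, h.map_smul, h.map_smul]

/-- Component formula for the bracket `[q_i, Q_{e_j}]` evaluated on basis vectors. -/
lemma brk_comp {n : ℕ} (q : Fin n → E n → E n → E n) (hq : ∀ i, IsSymmBilin (q i))
    (i j a b c m : Fin n) :
    brk (q i) (Qv (stdE n j)) (stdE n a) (stdE n b) (stdE n c) m =
      (dd b c * Xc q i a j m - dd b j * Xc q i a c m - dd c j * Xc q i a b m)
      + (dd c a * Xc q i b j m - dd c j * Xc q i b a m - dd a j * Xc q i b c m)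
      + (dd a b * Xc q i c j m - dd a j * Xc q i c b m - dd b j * Xc q i c a m)
      - (Xc q i b c a * dd m j - dd a j * Xc q i b c m - Xc q i b c j * dd m a)
      - (Xc q i c a b * dd m j - dd b j * Xc q i c a m - Xc q i c a j * dd m b)
      - (Xc q i a b c * dd m j - dd c j * Xc q i a b m - Xc q i a b j * dd m c) := by
  unfold brk
  rw [Qv_basis j b c, Qv_basis j c a, Qv_basis j a b,
    q_lin (q i) (hq i), q_lin (q i) (hq i), q_lin (q i) (hq i)]
  simp only [PiLp.add_apply, PiLp.sub_apply, PiLp.smul_apply, smul_eq_mul,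
    Qv_apply, Xc]
  ring

/-- Any vector of `ℝ^n` is the sum of its coordinates times the basis vectors. -/
lemma stdE_repr {n : ℕ} (θ : E n) : θ = ∑ m, θ m • stdE n m := by
  ext t
  have h : (∑ m, θ m • stdE n m) t = ∑ m, (θ m • stdE n m) t :=
    by rw [WithLp.ofLp_sum, Finset.sum_apply]
  rw [h]
  simp [stdE, EuclideanSpace.single_apply]

/-- Lemma `lemma:inj 5`: for `n ≥ 4` and `(q_1,…,q_n) ∈ Ker L^Ψ_I ∩ W`,
`q_i(e_j,e_k) = 0` for all `i, j, k`; consequently `q_1 = ⋯ = q_n = 0`,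
i.e. `Ker L^Ψ_I ∩ W = {0}`. -/
theorem stmt10 {n : ℕ} (hn : 4 ≤ n)
    (q : Fin n → E n → E n → E n) (hq : ∀ i, IsSymmBilin (q i))
    (hker : KerPsi (stdE n) q) (hW : memW ⟨0, by omega⟩ q) :
    (∀ i j k : Fin n, q i (stdE n j) (stdE n k) = 0) ∧
    (∀ i, ∀ ξ η : E n, q i ξ η = 0) := by
  set z : Fin n := ⟨0, by omega⟩ with hzdef
  -- symmetry of the arguments
  have hsym : ∀ i a b m, Xc q i a b m = Xc q i b a m := by
    intro i a b m
    unfold Xc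
    rw [(hq i).1 (stdE n a) (stdE n b)]
  -- conditions from W
  have hW1 : ∀ j m, Xc q j j j m = 0 := by
    intro j m
    unfold Xc
    rw [hW.1 j]
    rfl
  have hW2 : ∀ i j, Xc q j i i i + Xc q i j j j = 0 := by
    intro i j
    have h := hW.2.1 i j
    rwa [inner_stdE_left, inner_stdE_left] at h
  have hW3 : ∀ j, Xc q z j j z = 0 := by
    intro j
    have h := hW.2.2 j
    rwa [inner_stdE_left] at h
  -- the kernel equation, for any pair of distinct indices
  have hK : ∀ i j, i ≠ j → ∀ ξ η θ : E n,
      brk (q i) (Qv (stdE n j)) ξ η θ = brk (q j) (Qv (stdE n i)) ξ η θ := by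
    intro i j hij ξ η θ
    rcases lt_or_gt_of_ne hij with h | h
    · exact hker i j h ξ η θ
    · exact (hker j i h ξ η θ).symm
  have F : ∀ i j a b c m : Fin n, i ≠ j →
      brk (q i) (Qv (stdE n j)) (stdE n a) (stdE n b) (stdE n c) m
        = brk (q j) (Qv (stdE n i)) (stdE n a) (stdE n b) (stdE n c) m := by
    intro i j a b c m hij
    rw [hK i j hij]
  -- Step B : `q_i(e_i, e_j) = 0` for `i ≠ j`.
  have hB : ∀ i j : Fin n, i ≠ j → ∀ m, Xc q i i j m = 0 := by
    intro i j hij m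
    have h := F i j i i i m hij
    rw [brk_comp q hq, brk_comp q hq] at h
    simp [dd, if_pos rfl, if_neg hij, if_neg (Ne.symm hij), hW1] at h
    linarith [h]
  have hB' : ∀ i j : Fin n, i ≠ j → ∀ m, Xc q i j i m = 0 := by
    intro i j hij m
    rw [hsym]
    exact hB i j hij m
  -- Step D : from `F i j i i j m`.
  have hD1 : ∀ i j : Fin n, i ≠ j → ∀ m, m ≠ i → m ≠ j → Xc q i j j m = 0 := by
    intro i j hij m hmi hmj
    have h := F i j i i j m hij
    rw [brk_comp q hq, brk_comp q hq] at h
    simp [dd, if_pos rfl, if_neg hij, if_neg (Ne.symm hij), if_neg hmi, if_neg hmj,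
      hW1, hB i j hij, hB' i j hij, hB j i (Ne.symm hij), hB' j i (Ne.symm hij)] at h
    linarith [h]
  have hD2 : ∀ i j : Fin n, i ≠ j → Xc q i j j i + Xc q j i i j = 0 := by
    intro i j hij
    have h := F i j i i j i hij
    rw [brk_comp q hq, brk_comp q hq] at h
    simp [dd, if_pos rfl, if_neg hij, if_neg (Ne.symm hij),
      hW1, hB i j hij, hB' i j hij, hB j i (Ne.symm hij), hB' j i (Ne.symm hij)] at h
    linarith [h]
  have hD3 : ∀ i j : Fin n, i ≠ j → Xc q i j j j = Xc q j i i i := by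
    intro i j hij
    have h := F i j i i j j hij
    rw [brk_comp q hq, brk_comp q hq] at h
    simp [dd, if_pos rfl, if_neg hij, if_neg (Ne.symm hij),
      hW1, hB i j hij, hB' i j hij, hB j i (Ne.symm hij), hB' j i (Ne.symm hij)] at h
    linarith [h]
  -- Step E : `⟨e_j, q_i(e_j,e_j)⟩ = 0` for `i ≠ j`.
  have hE : ∀ i j : Fin n, i ≠ j → Xc q i j j j = 0 := by
    intro i j hij
    have h1 := hW2 j i
    have h2 := hD3 i j hij
    linarith [h1, h2]
  -- Step G : `⟨·, q_i(e_c,e_j)⟩ = −⟨·, q_j(e_i,e_c)⟩` for distinct `i,j,c`.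
  have hG : ∀ i j c : Fin n, i ≠ j → c ≠ i → c ≠ j → ∀ m,
      Xc q i c j m + Xc q j i c m = 0 := by
    intro i j c hij hci hcj m
    have h := F i j i i c m hij
    rw [brk_comp q hq, brk_comp q hq] at h
    simp [dd, if_pos rfl, if_neg hij, if_neg (Ne.symm hij), if_neg hci,
      if_neg hcj, if_neg (Ne.symm hci), if_neg (Ne.symm hcj), hW1,
      hB i c (Ne.symm hci), hB' i c (Ne.symm hci),
      hD1 j i (Ne.symm hij) c hcj hci, hE j i (Ne.symm hij)] at h
    linarith [h, hsym j c i m, hsym j i c m]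
  -- Step H : `q_i(e_a,e_b) = 0` for `i,a,b` pairwise distinct.
  have hH : ∀ i a b : Fin n, i ≠ a → i ≠ b → a ≠ b → ∀ m, Xc q i a b m = 0 := by
    intro i a b hia hib hab m
    have h1 := hG i b a hib (Ne.symm hia) hab m
    have h2 := hG b a i (Ne.symm hab) hib hia m
    have h3 := hG a i b (Ne.symm hia) (Ne.symm hab) (Ne.symm hib) m
    linarith [h1, h2, h3]
  -- Step J : relation among the `⟨e_i, q_i(e_j,e_j)⟩`.
  have hJ : ∀ i j k : Fin n, i ≠ j → i ≠ k → j ≠ k →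
      Xc q i j j i - Xc q i k k i + Xc q j k k j = 0 := by
    intro i j k hij hik hjk
    have h := F i j j k k i hij
    rw [brk_comp q hq, brk_comp q hq] at h
    simp [dd, if_pos rfl, if_neg hij, if_neg (Ne.symm hij), if_neg hik,
      if_neg (Ne.symm hik), if_neg hjk, if_neg (Ne.symm hjk), hW1,
      hB j i (Ne.symm hij), hB' j i (Ne.symm hij),
      hB j k hjk, hB' j k hjk, hB i j hij, hB' i j hij,
      hB i k hik, hB' i k hik] at h
    linarith [h]
  -- Step y : `⟨e_i, q_i(e_j,e_j)⟩ = 0` for `i ≠ j`.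
  have hy : ∀ i j : Fin n, i ≠ j → Xc q i j j i = 0 := by
    intro i j hij
    rcases eq_or_ne i z with hiz | hiz
    · rw [hiz]
      exact hW3 j
    · rcases eq_or_ne j z with hjz | hjz
      · rw [hjz]
        have h := hD2 i z (hjz ▸ hij)
        have h2 : Xc q z i i z = 0 := hW3 i
        linarith [h, h2]
      · have h := hJ i j z hij hiz hjz
        have h1 : Xc q i z z i = 0 := by
          have ha := hD2 i z hiz
          have hb : Xc q z i i z = 0 := hW3 i
          linarith [ha, hb]
        have h2 : Xc q j z z j = 0 := by
          have ha := hD2 j z hjz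
          have hb : Xc q z j j z = 0 := hW3 j
          linarith [ha, hb]
        linarith [h, h1, h2]
  -- All components vanish.
  have hall : ∀ i a b m : Fin n, Xc q i a b m = 0 := by
    intro i a b m
    rcases eq_or_ne a b with hab | hab
    · rw [hab]
      rcases eq_or_ne i b with hib | hib
      · rw [hib]
        exact hW1 b m
      · rcases eq_or_ne m i with hmi | hmi
        · rw [hmi]
          exact hy i b hib
        · rcases eq_or_ne m b with hmb | hmb
          · rw [hmb]
            exact hE i b hib
          · exact hD1 i b hib m hmi hmb
    · rcases eq_or_ne i a with hia | hia
      · rw [hia]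
        exact hB a b hab m
      · rcases eq_or_ne i b with hib | hib
        · rw [hib, hsym]
          exact hB b a (Ne.symm hab) m
        · exact hH i a b hia hib hab m
  have hpart1 : ∀ i j k : Fin n, q i (stdE n j) (stdE n k) = 0 := by
    intro i j k
    ext m
    exact hall i j k m
  refine ⟨hpart1, ?_⟩
  intro i ξ η
  have hlin := (hq i).2
  have hstep : ∀ w : E n, (∀ m, q i w (stdE n m) = 0) → q i w η = 0 := by
    intro w hw
    have hLdef : ∀ θ, q i w θ = IsLinearMap.mk' _ (hlin w) θ := fun θ => rfl
    rw [hLdef, stdE_repr η, map_sum]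
    simp only [map_smul]
    rw [Finset.sum_eq_zero]
    intro m _
    rw [← hLdef, hw m]
    simp
  apply hstep
  intro m
  rw [(hq i).1]
  have hstep2 : q i (stdE n m) ξ = 0 := by
    have hLdef : ∀ θ, q i (stdE n m) θ = IsLinearMap.mk' _ (hlin (stdE n m)) θ := fun θ => rfl
    rw [hLdef, stdE_repr ξ, map_sum]
    simp only [map_smul]
    rw [Finset.sum_eq_zero]
    intro k _
    rw [← hLdef, hpart1 i m k]
    simp
  exact hstep2
end
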